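/- Let p be an odd prime, s a positive integer, d(s) = ⌊ s(p−1)/(p−2) ⌋ + 1, and E_s(x) = Σ_{k=0}^{d(s)} x^k/k!. Treating μ, x, u, v as polynomial variables over ℤ_p, the following congruences of polynomials hold modulo p^s: (∂/∂x) E_s(pμx) ≡ pμ E_s(pμx), (∂/∂μ) E_s(pμx) ≡ px E_s(pμx) in ℤ_p[μ,x], and E_s(pμ(u+v)) ≡ E_s(pμu)·E_s(pμv) in ℤ_p[μ,u,v]. -/

import Mathlib

open MvPolynomial

/-- `d(s) = ⌊s(p−1)/(p−2)⌋ + 1`. -/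
def truncDeg (p s : ℕ) : ℕ := s * (p - 1) / (p - 2) + 1

/-- `E_s(pμx)` as a polynomial in the two variables `μ = X 0`, `x = X 1` over `ℚ_p`. -/
noncomputable def truncExpMuX (p : ℕ) [Fact p.Prime] (s : ℕ) : MvPolynomial (Fin 2) ℚ_[p] :=
  ∑ k ∈ Finset.range (truncDeg p s + 1),
    C ((p : ℚ_[p]) ^ k / (k.factorial : ℚ_[p])) * (X 0 * X 1) ^ k

/-- `E_s(pμ(u+v))` as a polynomial in `μ = X 0`, `u = X 1`, `v = X 2` over `ℚ_p`. -/
noncomputable def truncExpMuUV (p : ℕ) [Fact p.Prime] (s : ℕ) : MvPolynomial (Fin 3) ℚ_[p] :=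
  ∑ k ∈ Finset.range (truncDeg p s + 1),
    C ((p : ℚ_[p]) ^ k / (k.factorial : ℚ_[p])) * (X 0 * (X 1 + X 2)) ^ k

/-- `E_s(pμu)` (resp. `E_s(pμv)`) as a polynomial in `μ = X 0`, `u = X 1`, `v = X 2`. -/
noncomputable def truncExpMuU (p : ℕ) [Fact p.Prime] (s : ℕ) (i : Fin 3) :
    MvPolynomial (Fin 3) ℚ_[p] :=
  ∑ k ∈ Finset.range (truncDeg p s + 1),
    C ((p : ℚ_[p]) ^ k / (k.factorial : ℚ_[p])) * (X 0 * X i) ^ k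

namespace TruncExpAux

open Finsupp

variable {p : ℕ} [hp : Fact p.Prime]

lemma key_nat (hp2 : p ≠ 2) {s k : ℕ} (hs : 0 < s)
    (hk : truncDeg p s < k) : padicValNat p (k.factorial) + s ≤ k := by
  have hp3 : 3 ≤ p := by have h2 := hp.out.two_le; omega
  set v := padicValNat p (k.factorial) with hv
  have hleg : (p - 1) * v ≤ k := by
    rw [hv, sub_one_mul_padicValNat_factorial]
    exact Nat.sub_le _ _
  set q := s * (p - 1) / (p - 2) with hqdef
  have hq : s * (p - 1) < (p - 2) * (q + 1) :=
    Nat.lt_mul_div_succ _ (by omega)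
  have hq2 : (p - 2) * (q + 1) ≤ (p - 2) * k :=
    Nat.mul_le_mul_left _ (by unfold truncDeg at hk; omega)
  have hkey : s * (p - 1) ≤ (p - 2) * k := le_of_lt (lt_of_lt_of_le hq hq2)
  have hfin : (p - 1) * (v + s) ≤ (p - 1) * k := by
    have e1 : (p - 1) * (v + s) = (p - 1) * v + s * (p - 1) := by ring
    rw [e1]
    calc (p-1)*v + s*(p-1) ≤ k + (p-2) * k := Nat.add_le_add hleg hkey
    _ = (p-1) * k := by
        obtain ⟨m, rfl⟩ : ∃ m, p = m + 3 := ⟨p - 3, by omega⟩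
        have e2 : m + 3 - 2 = m + 1 := by omega
        have e3 : m + 3 - 1 = m + 2 := by omega
        rw [e2, e3]; ring
  exact Nat.le_of_mul_le_mul_left hfin (by omega)

lemma norm_natCast_le_one (n : ℕ) : ‖(n : ℚ_[p])‖ ≤ 1 := by
  have := Padic.norm_int_le_one (p := p) (n : ℤ)
  push_cast at this
  exact this

lemma norm_key (hp2 : p ≠ 2) {s k : ℕ} (hs : 0 < s)
    (hk : truncDeg p s < k) :
    ‖(p : ℚ_[p]) ^ k / (k.factorial : ℚ_[p])‖ ≤ (p : ℝ) ^ (-(s : ℤ)) := by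
  have hp1 : (1 : ℝ) < p := by exact_mod_cast hp.out.one_lt
  have hfne : ((k.factorial : ℕ) : ℚ_[p]) ≠ 0 := Nat.cast_ne_zero.mpr k.factorial_pos.ne'
  have hnf : ‖((k.factorial : ℕ) : ℚ_[p])‖ = (p : ℝ) ^ (-(padicValNat p k.factorial : ℤ)) := by
    rw [Padic.norm_eq_zpow_neg_valuation hfne, Padic.valuation_natCast]
  rw [norm_div, norm_pow, Padic.norm_p, hnf]
  rw [← zpow_natCast ((p:ℝ)⁻¹), inv_zpow', ← zpow_sub₀ (by positivity)]
  refine zpow_le_zpow_right₀ (le_of_lt hp1) ?_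
  have := key_nat hp2 hs hk
  omega

lemma coeff_sum_monomial_norm_le {σ ι : Type*}
    (F : Finset ι) (e : ι → (σ →₀ ℕ)) (c : ι → ℚ_[p]) {ε : ℝ} (hε : 0 ≤ ε)
    (h : ∀ a ∈ F, ‖c a‖ ≤ ε) (m : σ →₀ ℕ) :
    ‖(∑ a ∈ F, monomial (e a) (c a)).coeff m‖ ≤ ε := by
  classical
  rw [MvPolynomial.coeff_sum]
  refine IsUltrametricDist.norm_sum_le_of_forall_le_of_nonneg hε ?_
  intro a ha
  rw [MvPolynomial.coeff_monomial]
  split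
  · exact h a ha
  · simpa using hε

lemma cast_succ_fac (j : ℕ) :
    (p : ℚ_[p]) ^ (j+1) / ((j+1).factorial : ℚ_[p]) * ((j:ℚ_[p])+1)
      = (p : ℚ_[p]) * ((p : ℚ_[p]) ^ j / (j.factorial : ℚ_[p])) := by
  have h1 : ((j+1).factorial : ℚ_[p]) = ((j:ℚ_[p])+1) * (j.factorial : ℚ_[p]) := by
    rw [Nat.factorial_succ]; push_cast; ring
  have h2 : (j.factorial : ℚ_[p]) ≠ 0 := Nat.cast_ne_zero.mpr j.factorial_pos.ne'
  have h3 : ((j:ℚ_[p])+1) ≠ 0 := by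
    have : ((j+1 : ℕ) : ℚ_[p]) ≠ 0 := Nat.cast_ne_zero.mpr (Nat.succ_ne_zero j)
    push_cast at this; exact this
  field_simp [h1]
  rw [h1]; ring

/-- The top coefficient `p^{d+1}/d!` has norm at most `p^{-s}`. -/
lemma norm_top (hp2 : p ≠ 2) {s : ℕ} (hs : 0 < s) :
    ‖(p : ℚ_[p]) * ((p : ℚ_[p]) ^ (truncDeg p s) / ((truncDeg p s).factorial : ℚ_[p]))‖
      ≤ (p : ℝ) ^ (-(s : ℤ)) := by
  set d := truncDeg p s with hd
  have heq : (p : ℚ_[p]) * ((p : ℚ_[p]) ^ d / (d.factorial : ℚ_[p]))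
      = ((d+1 : ℕ) : ℚ_[p]) * ((p : ℚ_[p]) ^ (d+1) / ((d+1).factorial : ℚ_[p])) := by
    have := cast_succ_fac (p := p) d
    push_cast at this ⊢
    rw [← this]; ring
  rw [heq, norm_mul]
  calc ‖((d+1 : ℕ) : ℚ_[p])‖ * ‖(p : ℚ_[p]) ^ (d+1) / ((d+1).factorial : ℚ_[p])‖
      ≤ 1 * ((p : ℝ) ^ (-(s : ℤ))) := by
        refine mul_le_mul (norm_natCast_le_one _) (norm_key hp2 hs (by omega)) (norm_nonneg _) zero_le_one
    _ = (p : ℝ) ^ (-(s : ℤ)) := one_mul _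

lemma term_eq_monomial (k : ℕ) :
    C ((p : ℚ_[p]) ^ k / (k.factorial : ℚ_[p])) * (X 0 * X 1 : MvPolynomial (Fin 2) ℚ_[p]) ^ k
      = monomial (single 0 k + single 1 k) ((p : ℚ_[p]) ^ k / (k.factorial : ℚ_[p])) := by
  rw [mul_pow, X_pow_eq_monomial, X_pow_eq_monomial, C_apply, monomial_mul, monomial_mul]
  simp

lemma id1 (s : ℕ) :
    pderiv 1 (truncExpMuX p s) - C (p : ℚ_[p]) * X 0 * truncExpMuX p s
      = - monomial (single 0 (truncDeg p s + 1) + single 1 (truncDeg p s))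
          ((p : ℚ_[p]) * ((p : ℚ_[p]) ^ (truncDeg p s) / ((truncDeg p s).factorial : ℚ_[p]))) := by
  classical
  set d := truncDeg p s with hd
  rw [truncExpMuX]
  simp only [term_eq_monomial]
  rw [map_sum, Finset.mul_sum]
  have hD : ∀ k : ℕ, pderiv (1 : Fin 2)
      (monomial (single 0 k + single 1 k) ((p : ℚ_[p]) ^ k / (k.factorial : ℚ_[p])))
      = monomial (single 0 k + single 1 (k-1))
          ((p : ℚ_[p]) ^ k / (k.factorial : ℚ_[p]) * (k : ℚ_[p])) := by
    intro k
    rw [pderiv_monomial]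
    have hidx : (single 0 k + single 1 k) - single (1 : Fin 2) 1 = single 0 k + single 1 (k-1) := by
      ext a; fin_cases a <;> simp [Finsupp.single_apply]
    have hval : ((single (0:Fin 2) k + single 1 k) : Fin 2 →₀ ℕ) 1 = k := by
      simp [Finsupp.single_apply]
    rw [hidx, hval]
  have hM : ∀ k : ℕ, C (p:ℚ_[p]) * (X 0 : MvPolynomial (Fin 2) ℚ_[p]) *
      (monomial (single 0 k + single 1 k) ((p : ℚ_[p]) ^ k / (k.factorial : ℚ_[p])))
      = monomial (single 0 (k+1) + single 1 k)
          ((p:ℚ_[p]) * ((p : ℚ_[p]) ^ k / (k.factorial : ℚ_[p]))) := by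
    intro k
    rw [C_mul_X_eq_monomial, monomial_mul]
    have hidx : single (0 : Fin 2) 1 + (single 0 k + single 1 k)
        = single 0 (k+1) + single 1 k := by
      ext a; fin_cases a <;> simp [Finsupp.single_apply] <;> omega
    rw [hidx]
  simp only [hD, hM, ← hd]
  rw [Finset.sum_range_succ' (fun k => monomial (single 0 k + single 1 (k-1))
        ((p : ℚ_[p]) ^ k / (k.factorial : ℚ_[p]) * (k : ℚ_[p]))) d]
  rw [Finset.sum_range_succ (fun k => monomial (single 0 (k+1) + single 1 k)
        ((p:ℚ_[p]) * ((p : ℚ_[p]) ^ k / (k.factorial : ℚ_[p])))) d]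
  have hz : (monomial (single (0:Fin 2) 0 + single 1 (0-1))
      ((p : ℚ_[p]) ^ 0 / ((Nat.factorial 0 : ℕ) : ℚ_[p]) * ((0:ℕ) : ℚ_[p]))) = 0 := by
    simp
  have hsame : ∀ j, (monomial (single (0:Fin 2) (j+1) + single 1 (j+1-1))
        ((p : ℚ_[p]) ^ (j+1) / ((j+1).factorial : ℚ_[p]) * ((j+1:ℕ) : ℚ_[p])))
      = monomial (single 0 (j+1) + single 1 j)
        ((p:ℚ_[p]) * ((p : ℚ_[p]) ^ j / (j.factorial : ℚ_[p]))) := by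
    intro j
    have h : j + 1 - 1 = j := rfl
    rw [h]
    congr 1
    push_cast
    exact cast_succ_fac j
  simp only [hsame, hz, add_zero]
  ring

lemma id2 (s : ℕ) :
    pderiv 0 (truncExpMuX p s) - C (p : ℚ_[p]) * X 1 * truncExpMuX p s
      = - monomial (single 0 (truncDeg p s) + single 1 (truncDeg p s + 1))
          ((p : ℚ_[p]) * ((p : ℚ_[p]) ^ (truncDeg p s) / ((truncDeg p s).factorial : ℚ_[p]))) := by
  classical
  set d := truncDeg p s with hd
  rw [truncExpMuX]
  simp only [term_eq_monomial]
  rw [map_sum, Finset.mul_sum]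
  have hD : ∀ k : ℕ, pderiv (0 : Fin 2)
      (monomial (single 0 k + single 1 k) ((p : ℚ_[p]) ^ k / (k.factorial : ℚ_[p])))
      = monomial (single 0 (k-1) + single 1 k)
          ((p : ℚ_[p]) ^ k / (k.factorial : ℚ_[p]) * (k : ℚ_[p])) := by
    intro k
    rw [pderiv_monomial]
    have hidx : (single 0 k + single 1 k) - single (0 : Fin 2) 1
        = single 0 (k-1) + single 1 k := by
      ext a; fin_cases a <;> simp [Finsupp.single_apply]
    have hval : ((single (0:Fin 2) k + single 1 k) : Fin 2 →₀ ℕ) 0 = k := by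
      simp [Finsupp.single_apply]
    rw [hidx, hval]
  have hM : ∀ k : ℕ, C (p:ℚ_[p]) * (X 1 : MvPolynomial (Fin 2) ℚ_[p]) *
      (monomial (single 0 k + single 1 k) ((p : ℚ_[p]) ^ k / (k.factorial : ℚ_[p])))
      = monomial (single 0 k + single 1 (k+1))
          ((p:ℚ_[p]) * ((p : ℚ_[p]) ^ k / (k.factorial : ℚ_[p]))) := by
    intro k
    rw [C_mul_X_eq_monomial, monomial_mul]
    have hidx : single (1 : Fin 2) 1 + (single 0 k + single 1 k)
        = single 0 k + single 1 (k+1) := by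
      ext a; fin_cases a <;> simp [Finsupp.single_apply] <;> omega
    rw [hidx]
  simp only [hD, hM, ← hd]
  rw [Finset.sum_range_succ' (fun k => monomial (single 0 (k-1) + single 1 k)
        ((p : ℚ_[p]) ^ k / (k.factorial : ℚ_[p]) * (k : ℚ_[p]))) d]
  rw [Finset.sum_range_succ (fun k => monomial (single 0 k + single 1 (k+1))
        ((p:ℚ_[p]) * ((p : ℚ_[p]) ^ k / (k.factorial : ℚ_[p])))) d]
  have hz : (monomial (single (0:Fin 2) (0-1) + single 1 0)
      ((p : ℚ_[p]) ^ 0 / ((Nat.factorial 0 : ℕ) : ℚ_[p]) * ((0:ℕ) : ℚ_[p]))) = 0 := by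
    simp
  have hsame : ∀ j, (monomial (single (0:Fin 2) (j+1-1) + single 1 (j+1))
        ((p : ℚ_[p]) ^ (j+1) / ((j+1).factorial : ℚ_[p]) * ((j+1:ℕ) : ℚ_[p])))
      = monomial (single 0 j + single 1 (j+1))
        ((p:ℚ_[p]) * ((p : ℚ_[p]) ^ j / (j.factorial : ℚ_[p]))) := by
    intro j
    have h : j + 1 - 1 = j := rfl
    rw [h]
    congr 1
    push_cast
    exact cast_succ_fac j
  simp only [hsame, hz, add_zero]
  ring

/-- The basic monomial `p^{i+j}/(i! j!) μ^{i+j} u^i v^j`. -/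
noncomputable def tmon (p : ℕ) [Fact p.Prime] (i j : ℕ) : MvPolynomial (Fin 3) ℚ_[p] :=
  monomial (single 0 (i+j) + single 1 i + single 2 j)
    ((p:ℚ_[p])^(i+j) / ((i.factorial : ℚ_[p]) * (j.factorial : ℚ_[p])))

lemma termU_eq_monomial (i : Fin 3) (k : ℕ) :
    C ((p : ℚ_[p]) ^ k / (k.factorial : ℚ_[p])) * (X 0 * X i : MvPolynomial (Fin 3) ℚ_[p]) ^ k
      = monomial (single 0 k + single i k) ((p : ℚ_[p]) ^ k / (k.factorial : ℚ_[p])) := by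
  rw [mul_pow, X_pow_eq_monomial, X_pow_eq_monomial, C_apply, monomial_mul, monomial_mul]
  simp

lemma eq2 (s : ℕ) :
    truncExpMuU p s 1 * truncExpMuU p s 2
      = ∑ x ∈ (Finset.range (truncDeg p s + 1)) ×ˢ (Finset.range (truncDeg p s + 1)),
          tmon p x.1 x.2 := by
  classical
  rw [truncExpMuU, truncExpMuU]
  simp only [termU_eq_monomial]
  rw [Finset.sum_mul_sum, Finset.sum_product]
  refine Finset.sum_congr rfl fun i _ => Finset.sum_congr rfl fun j _ => ?_
  rw [monomial_mul]
  unfold tmon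
  have hidx : (single (0:Fin 3) i + single 1 i) + (single 0 j + single 2 j)
      = single 0 (i+j) + single 1 i + single 2 j := by
    ext a; fin_cases a <;> simp [Finsupp.single_apply]
  rw [hidx]
  congr 1
  rw [pow_add, div_mul_div_comm]

lemma eq1 (s : ℕ) :
    truncExpMuUV p s
      = ∑ x ∈ ((Finset.range (truncDeg p s + 1)) ×ˢ (Finset.range (truncDeg p s + 1))).filter
          (fun x => x.1 + x.2 ≤ truncDeg p s),
          tmon p x.1 x.2 := by
  classical
  set d := truncDeg p s with hd
  rw [truncExpMuUV]
  have hterm : ∀ k ∈ Finset.range (d+1),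
      C ((p : ℚ_[p]) ^ k / (k.factorial : ℚ_[p]))
        * (X 0 * (X 1 + X 2) : MvPolynomial (Fin 3) ℚ_[p]) ^ k
      = ∑ i ∈ Finset.range (k+1), tmon p i (k-i) := by
    intro k _
    rw [mul_pow, add_pow, Finset.mul_sum, Finset.mul_sum]
    refine Finset.sum_congr rfl fun i hi => ?_
    rw [Finset.mem_range] at hi
    have hik : i ≤ k := by omega
    unfold tmon
    have hik2 : i + (k - i) = k := by omega
    have hcm : ((k.choose i : ℕ) : MvPolynomial (Fin 3) ℚ_[p])
        = monomial 0 ((k.choose i : ℕ) : ℚ_[p]) := by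
      rw [← C_apply]; simp
    rw [hcm]
    simp only [X_pow_eq_monomial, C_apply, monomial_mul, one_mul, mul_one, hik2]
    rw [MvPolynomial.monomial_eq_monomial_iff]
    left
    constructor
    · ext a; fin_cases a <;> simp [Finsupp.single_apply]
    · have hc : ((k.choose i : ℕ) : ℚ_[p])
          = (k.factorial : ℚ_[p]) / ((i.factorial : ℚ_[p]) * ((k-i).factorial : ℚ_[p])) := by
        rw [Nat.cast_choose ℚ_[p] hik]
      rw [hc]
      have h1 : (k.factorial : ℚ_[p]) ≠ 0 := Nat.cast_ne_zero.mpr k.factorial_pos.ne'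
      have h2 : (i.factorial : ℚ_[p]) ≠ 0 := Nat.cast_ne_zero.mpr i.factorial_pos.ne'
      have h3 : ((k-i).factorial : ℚ_[p]) ≠ 0 := Nat.cast_ne_zero.mpr (k-i).factorial_pos.ne'
      field_simp
  rw [Finset.sum_congr rfl hterm]
  rw [Finset.sum_sigma']
  refine Finset.sum_nbij' (fun x => (x.2, x.1 - x.2)) (fun y => ⟨y.1 + y.2, y.1⟩)
    ?_ ?_ ?_ ?_ ?_
  · rintro ⟨k, i⟩ hx
    simp only [Finset.mem_sigma, Finset.mem_range] at hx
    simp only [Finset.mem_filter, Finset.mem_product, Finset.mem_range]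
    omega
  · rintro ⟨i, j⟩ hy
    simp only [Finset.mem_filter, Finset.mem_product, Finset.mem_range] at hy
    simp only [Finset.mem_sigma, Finset.mem_range]
    omega
  · rintro ⟨k, i⟩ hx
    simp only [Finset.mem_sigma, Finset.mem_range] at hx
    have : i + (k - i) = k := by omega
    simp [this]
  · rintro ⟨i, j⟩ hy
    simp
  · rintro ⟨k, i⟩ hx
    rfl

lemma norm_tmon_coeff (hp2 : p ≠ 2) {s i j : ℕ} (hs : 0 < s)
    (h : truncDeg p s < i + j) :
    ‖(p:ℚ_[p])^(i+j) / ((i.factorial : ℚ_[p]) * (j.factorial : ℚ_[p]))‖ ≤ (p : ℝ) ^ (-(s:ℤ)) := by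
  have heq : (p:ℚ_[p])^(i+j) / ((i.factorial : ℚ_[p]) * (j.factorial : ℚ_[p]))
      = (((i+j).choose i : ℕ) : ℚ_[p])
        * ((p:ℚ_[p])^(i+j) / (((i+j).factorial : ℕ) : ℚ_[p])) := by
    rw [Nat.cast_choose ℚ_[p] (Nat.le_add_right i j), Nat.add_sub_cancel_left]
    have h1 : ((i+j).factorial : ℚ_[p]) ≠ 0 := Nat.cast_ne_zero.mpr (i+j).factorial_pos.ne'
    have h2 : (i.factorial : ℚ_[p]) ≠ 0 := Nat.cast_ne_zero.mpr i.factorial_pos.ne'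
    have h3 : (j.factorial : ℚ_[p]) ≠ 0 := Nat.cast_ne_zero.mpr j.factorial_pos.ne'
    field_simp
  rw [heq, norm_mul]
  calc ‖(((i+j).choose i : ℕ) : ℚ_[p])‖ * ‖(p:ℚ_[p])^(i+j) / (((i+j).factorial : ℕ) : ℚ_[p])‖
      ≤ 1 * ((p : ℝ) ^ (-(s : ℤ))) :=
        mul_le_mul (norm_natCast_le_one _) (norm_key hp2 hs h) (norm_nonneg _) zero_le_one
    _ = (p : ℝ) ^ (-(s : ℤ)) := one_mul _

end TruncExpAux

open TruncExpAux Finsupp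

theorem truncExp_derivative_and_addition_congr
    (p : ℕ) [Fact p.Prime] (hodd : p ≠ 2) (s : ℕ) (hs : 0 < s) :
    (∀ m : Fin 2 →₀ ℕ,
      ‖(pderiv 1 (truncExpMuX p s) - C (p : ℚ_[p]) * X 0 * truncExpMuX p s).coeff m‖ ≤
        (p : ℝ) ^ (-(s : ℤ))) ∧
    (∀ m : Fin 2 →₀ ℕ,
      ‖(pderiv 0 (truncExpMuX p s) - C (p : ℚ_[p]) * X 1 * truncExpMuX p s).coeff m‖ ≤
        (p : ℝ) ^ (-(s : ℤ))) ∧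
    (∀ m : Fin 3 →₀ ℕ,
      ‖(truncExpMuUV p s - truncExpMuU p s 1 * truncExpMuU p s 2).coeff m‖ ≤
        (p : ℝ) ^ (-(s : ℤ))) := by
  classical
  have hε : (0:ℝ) ≤ (p : ℝ) ^ (-(s : ℤ)) := by positivity
  refine ⟨?_, ?_, ?_⟩
  · intro m
    rw [id1]
    rw [MvPolynomial.coeff_neg, norm_neg, MvPolynomial.coeff_monomial]
    split
    · exact norm_top hodd hs
    · simpa using hε
  · intro m
    rw [id2]
    rw [MvPolynomial.coeff_neg, norm_neg, MvPolynomial.coeff_monomial]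
    split
    · exact norm_top hodd hs
    · simpa using hε
  · intro m
    rw [eq1, eq2]
    set P := (Finset.range (truncDeg p s + 1)) ×ˢ (Finset.range (truncDeg p s + 1)) with hP
    rw [show (∑ x ∈ P.filter (fun x => x.1 + x.2 ≤ truncDeg p s), tmon p x.1 x.2)
          - ∑ x ∈ P, tmon p x.1 x.2
        = - ∑ x ∈ P.filter (fun x => ¬ x.1 + x.2 ≤ truncDeg p s), tmon p x.1 x.2 by
      rw [← Finset.sum_filter_add_sum_filter_not P (fun x => x.1 + x.2 ≤ truncDeg p s)
        (fun x => tmon p x.1 x.2)]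
      ring]
    rw [MvPolynomial.coeff_neg, norm_neg]
    refine coeff_sum_monomial_norm_le _ _ _ hε ?_ m
    rintro ⟨i, j⟩ ha
    simp only [Finset.mem_filter, hP, Finset.mem_product, Finset.mem_range, not_le] at ha
    exact norm_tmon_coeff hodd hs ha.2
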